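/- Let $l \ge 2$, let $S = \{i_1 < \cdots < i_k\} \subseteq \{1,\dots,l-1\}$, and define $\mu_S \in \mathbb{R}^l$ by $\mu_S = \sum_{j=1}^{k} h_{i_j}\, \omega_{i_j}$ where $h_{i_j} = i_j + 2\sum_{s=j+1}^{k}(-1)^{s-j} i_s + (-1)^{k-j+1}(l - \tfrac{1}{2})$ and $\omega_i = \epsilon_1 + \cdots + \epsilon_i$ for $i \le l-1$. Then for every pair $1 \le i < j \le l$, the quantity $(\bar\rho + \mu_S,\ \epsilon_i - \epsilon_j)$ is strictly positive whenever $(\mu_S, \epsilon_i - \epsilon_j)$ is an integer, where $\bar\rho = \sum_{i=1}^{l}(l-i+\tfrac{1}{2})\epsilon_i$. -/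
import Mathlib

noncomputable section

/-- Standard dot product on `ℝ^l`. -/
def dotR {l : ℕ} (u v : Fin l → ℝ) : ℝ := ∑ t, u t * v t

/-- The standard basis vector `ε_i` of `ℝ^l`. -/
def epsR {l : ℕ} (i : Fin l) : Fin l → ℝ := fun t => if t = i then 1 else 0

/-- `ρ̄ = ∑ᵢ (l - i + 1/2) εᵢ` (0-indexed). -/
def rhoBarR (l : ℕ) : Fin l → ℝ := fun t => (l : ℝ) - (t : ℕ) - 1 / 2

end

lemma stmt16_dot_eps {l : ℕ} (u : Fin l → ℝ) (a b : Fin l) :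
    dotR u (epsR a - epsR b) = u a - u b := by
  simp [dotR, epsR, Pi.sub_apply, mul_sub, Finset.sum_sub_distrib, mul_ite, mul_one, mul_zero]

lemma stmt16_dot_add {l : ℕ} (u v w : Fin l → ℝ) : dotR (u + v) w = dotR u w + dotR v w := by
  simp [dotR, Pi.add_apply, add_mul, Finset.sum_add_distrib]

lemma stmt16_tele (G : ℕ → ℝ) (p q : ℕ) (hpq : p ≤ q) :
    ∑ j ∈ Finset.Ico p q, (G j - G (j+1)) = G p - G q := by
  induction q, hpq using Nat.le_induction with
  | base => simp
  | succ n hn ih => rw [Finset.sum_Ico_succ_top hn, ih]; ring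

lemma stmt16_initseg (S : Finset ℕ) (h : ∀ m n, m ≤ n → n ∈ S → m ∈ S) :
    S = Finset.range S.card := by
  ext j
  simp only [Finset.mem_range]
  constructor
  · intro hj
    have hsub : Finset.range (j+1) ⊆ S := fun m hm =>
      h m j (Nat.lt_succ_iff.mp (Finset.mem_range.mp hm)) hj
    have := Finset.card_le_card hsub
    simpa using this
  · intro hj
    by_contra hjS
    have hsub : S ⊆ Finset.range j := by
      intro n hn
      simp only [Finset.mem_range]
      by_contra hnj
      exact hjS (h j n (Nat.le_of_not_lt hnj) hn)
    have := Finset.card_le_card hsub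
    simp at this; omega

lemma stmt16_keyineq (k : ℕ) (i : ℕ → ℕ) (hmono : ∀ a b, a < b → b < k → i a < i b) :
    ∀ n p, p + 2*(n+1) ≤ k →
      (i p : ℝ) - (i (p + 2*(n+1) - 1) : ℝ) ≤ ∑ s ∈ Finset.Ico p (p+2*(n+1)), (-1:ℝ)^(s-p) * (i s:ℝ) := by
  intro n
  induction n with
  | zero =>
    intro p hp
    have h1 : p + 2*1 = (p+1)+1 := by ring
    rw [h1, Finset.sum_Ico_succ_top (by omega), Finset.sum_Ico_succ_top (by omega),
      Finset.Ico_self, Finset.sum_empty]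
    have e1 : p - p = 0 := by omega
    have e2 : p + 1 - p = 1 := by omega
    have e3 : (p+1)+1-1 = p+1 := by omega
    rw [e1, e2, e3]
    simp
  | succ n ih =>
    intro p hp
    have hsplit : Finset.Ico p (p+2*(n+1+1)) = Finset.Ico p (p+2) ∪ Finset.Ico (p+2) (p+2*(n+1+1)) := by
      rw [Finset.Ico_union_Ico_eq_Ico (by omega) (by omega)]
    have hdisj : Disjoint (Finset.Ico p (p+2)) (Finset.Ico (p+2) (p+2*(n+1+1))) :=
      Finset.Ico_disjoint_Ico_consecutive _ _ _
    rw [hsplit, Finset.sum_union hdisj]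
    have hfirst : ∑ s ∈ Finset.Ico p (p+2), (-1:ℝ)^(s-p) * (i s:ℝ) = (i p : ℝ) - (i (p+1) : ℝ) := by
      have h1 : p + 2 = (p+1)+1 := by ring
      rw [h1, Finset.sum_Ico_succ_top (by omega), Finset.sum_Ico_succ_top (by omega),
        Finset.Ico_self, Finset.sum_empty]
      have e1 : p - p = 0 := by omega
      have e2 : p + 1 - p = 1 := by omega
      rw [e1, e2]; norm_num; ring
    have hsecond : ∑ s ∈ Finset.Ico (p+2) (p+2*(n+1+1)), (-1:ℝ)^(s-p) * (i s:ℝ)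
        = ∑ s ∈ Finset.Ico (p+2) ((p+2)+2*(n+1)), (-1:ℝ)^(s-(p+2)) * (i s:ℝ) := by
      rw [show p+2*(n+1+1) = (p+2)+2*(n+1) by ring]
      refine Finset.sum_congr rfl fun s hs => ?_
      have hs' := Finset.mem_Ico.mp hs
      have : s - p = (s - (p+2)) + 2 := by omega
      rw [this, pow_add]; norm_num
    have hih := ih (p+2) (by omega)
    have hm : (i (p+1) : ℝ) ≤ (i (p+2) : ℝ) := by
      have : i (p+1) < i (p+2) := hmono _ _ (by omega) (by omega)
      exact_mod_cast this.le
    have heq : (p+2) + 2*(n+1) - 1 = p + 2*(n+1+1) - 1 := by omega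
    rw [hfirst, hsecond]
    rw [heq] at hih
    linarith

/-- For `S = {i₁ < ⋯ < i_k} ⊆ {1,…,l-1}` (here `i 0, …, i (k-1)`), with
`h_{i_j} = i_j + 2∑_{s>j}(-1)^{s-j} i_s + (-1)^{k-j+1}(l-1/2)` and
`μ_S = ∑_j h_{i_j} ω_{i_j}` where `ω_i = ε₁ + ⋯ + ε_i`: for all `1 ≤ a < b ≤ l`, if
`(μ_S, ε_a - ε_b)` is an integer then `(ρ̄ + μ_S, ε_a - ε_b) > 0`. -/
theorem stmt_16 (l k : ℕ) (hl : 2 ≤ l) (i : ℕ → ℕ)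
    (hmono : ∀ a b, a < b → b < k → i a < i b)
    (hrange : ∀ j < k, 1 ≤ i j ∧ i j ≤ l - 1) :
    let h : ℕ → ℝ := fun j => (i j : ℝ)
      + 2 * ∑ s ∈ Finset.Ico (j + 1) k, (-1 : ℝ) ^ (s - j) * (i s : ℝ)
      + (-1 : ℝ) ^ (k - j) * ((l : ℝ) - 1 / 2)
    let μS : Fin l → ℝ := fun t => ∑ j ∈ Finset.range k, if (t : ℕ) < i j then h j else 0
    ∀ a b : Fin l, a < b → (∃ z : ℤ, dotR μS (epsR a - epsR b) = (z : ℝ)) →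
      0 < dotR (rhoBarR l + μS) (epsR a - epsR b) := by
  intro h μS a b hab hint
  have hab' : (a : ℕ) < (b : ℕ) := hab
  -- the sets of indices below a and below b
  set Sa : Finset ℕ := (Finset.range k).filter (fun j => i j ≤ (a:ℕ)) with hSa
  set Sb : Finset ℕ := (Finset.range k).filter (fun j => i j ≤ (b:ℕ)) with hSb
  have hdc : ∀ (c : ℕ), ∀ m n, m ≤ n → n ∈ (Finset.range k).filter (fun j => i j ≤ c) →
      m ∈ (Finset.range k).filter (fun j => i j ≤ c) := by
    intro c m n hmn hn
    simp only [Finset.mem_filter, Finset.mem_range] at hn ⊢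
    refine ⟨by omega, ?_⟩
    rcases eq_or_lt_of_le hmn with rfl | hlt
    · exact hn.2
    · exact le_trans (hmono m n hlt hn.1).le hn.2
  set p : ℕ := Sa.card with hp
  set q : ℕ := Sb.card with hq
  have hSa' : Sa = Finset.range p := stmt16_initseg Sa (hdc _)
  have hSb' : Sb = Finset.range q := stmt16_initseg Sb (hdc _)
  have hia : ∀ j, j < k → (i j ≤ (a:ℕ) ↔ j < p) := by
    intro j hj
    constructor
    · intro hij
      have : j ∈ Sa := by simp [hSa, Finset.mem_filter, Finset.mem_range, hj, hij]
      rw [hSa'] at this; exact Finset.mem_range.mp this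
    · intro hjp
      have : j ∈ Sa := by rw [hSa']; exact Finset.mem_range.mpr hjp
      simp [hSa, Finset.mem_filter] at this; exact this.2
  have hib : ∀ j, j < k → (i j ≤ (b:ℕ) ↔ j < q) := by
    intro j hj
    constructor
    · intro hij
      have : j ∈ Sb := by simp [hSb, Finset.mem_filter, Finset.mem_range, hj, hij]
      rw [hSb'] at this; exact Finset.mem_range.mp this
    · intro hjq
      have : j ∈ Sb := by rw [hSb']; exact Finset.mem_range.mpr hjq
      simp [hSb, Finset.mem_filter] at this; exact this.2
  have hpk : p ≤ k := by
    rw [hp, hSa]; exact le_trans (Finset.card_filter_le _ _) (by simp)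
  have hqk : q ≤ k := by
    rw [hq, hSb]; exact le_trans (Finset.card_filter_le _ _) (by simp)
  have hpq : p ≤ q := by
    rw [hp, hq]
    apply Finset.card_le_card
    intro j hj
    simp only [hSa, hSb, Finset.mem_filter] at hj ⊢
    exact ⟨hj.1, le_trans hj.2 hab'.le⟩
  -- the μ-difference is a sum over Ico p q
  have hT : (Finset.range k).filter (fun j => (a:ℕ) < i j ∧ i j ≤ (b:ℕ)) = Finset.Ico p q := by
    ext j
    simp only [Finset.mem_filter, Finset.mem_range, Finset.mem_Ico]
    constructor
    · rintro ⟨hjk, hja, hjb⟩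
      refine ⟨?_, (hib j hjk).mp hjb⟩
      by_contra hcon
      exact absurd ((hia j hjk).mpr (by omega)) (by omega)
    · rintro ⟨hjp, hjq⟩
      have hjk : j < k := lt_of_lt_of_le hjq hqk
      refine ⟨hjk, ?_, (hib j hjk).mpr hjq⟩
      by_contra hcon
      have := (hia j hjk).mp (by omega)
      omega
  have hD : dotR μS (epsR a - epsR b) = ∑ j ∈ Finset.Ico p q, h j := by
    rw [stmt16_dot_eps]
    show (∑ j ∈ Finset.range k, if (a:ℕ) < i j then h j else 0)
      - (∑ j ∈ Finset.range k, if (b:ℕ) < i j then h j else 0) = _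
    rw [← Finset.sum_sub_distrib, ← hT, Finset.sum_filter]
    refine Finset.sum_congr rfl fun j hj => ?_
    rcases lt_or_ge (b:ℕ) (i j) with h2 | h2
    · have h1 : (a:ℕ) < i j := lt_of_le_of_lt hab'.le h2
      rw [if_pos h1, if_pos h2, if_neg (by omega : ¬((a:ℕ) < i j ∧ i j ≤ (b:ℕ)))]
      ring
    · rcases lt_or_ge (a:ℕ) (i j) with h1 | h1
      · rw [if_pos h1, if_neg (by omega : ¬ (b:ℕ) < i j), if_pos ⟨h1, h2⟩]
        ring
      · rw [if_neg (by omega : ¬ (a:ℕ) < i j), if_neg (by omega : ¬ (b:ℕ) < i j),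
          if_neg (by omega : ¬((a:ℕ) < i j ∧ i j ≤ (b:ℕ)))]
        ring
  -- telescoping
  set G : ℕ → ℝ := fun j => ∑ s ∈ Finset.Ico j k, (-1:ℝ)^(s-j) * (i s:ℝ) with hG
  have hGsucc : ∀ j, j < k → ∑ s ∈ Finset.Ico (j+1) k, (-1:ℝ)^(s-j) * (i s:ℝ) = - G (j+1) := by
    intro j hj
    show _ = -G (j+1)
    rw [show G (j+1) = ∑ s ∈ Finset.Ico (j+1) k, (-1:ℝ)^(s-(j+1)) * (i s:ℝ) from rfl,
      ← Finset.sum_neg_distrib]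
    refine Finset.sum_congr rfl fun s hs => ?_
    have hs' := Finset.mem_Ico.mp hs
    have : s - j = (s - (j+1)) + 1 := by omega
    rw [this, pow_succ]; ring
  have hGj : ∀ j, j < k → G j = (i j : ℝ) - G (j+1) := by
    intro j hj
    show (∑ s ∈ Finset.Ico j k, (-1:ℝ)^(s-j) * (i s:ℝ)) = (i j : ℝ) - G (j+1)
    rw [Finset.sum_eq_sum_Ico_succ_bot hj]
    simp only [Nat.sub_self, pow_zero, one_mul]
    rw [hGsucc j hj]
    ring
  have hstep : ∀ j, j < k → h j = (G j - G (j+1)) + (-1:ℝ)^(k-j) * ((l:ℝ) - 1/2) := by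
    intro j hj
    show (i j : ℝ) + 2 * (∑ s ∈ Finset.Ico (j + 1) k, (-1 : ℝ) ^ (s - j) * (i s : ℝ))
      + (-1 : ℝ) ^ (k - j) * ((l : ℝ) - 1 / 2) = _
    rw [hGsucc j hj]
    have := hGj j hj
    linarith [hGj j hj]
  set E : ℝ := ∑ j ∈ Finset.Ico p q, (-1:ℝ)^(k-j) with hE
  have hDtele : ∑ j ∈ Finset.Ico p q, h j = G p - G q + ((l:ℝ) - 1/2) * E := by
    have : ∑ j ∈ Finset.Ico p q, h j
        = ∑ j ∈ Finset.Ico p q, ((G j - G (j+1)) + (-1:ℝ)^(k-j) * ((l:ℝ) - 1/2)) := by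
      refine Finset.sum_congr rfl fun j hj => ?_
      have hj' := Finset.mem_Ico.mp hj
      exact hstep j (by omega)
    rw [this, Finset.sum_add_distrib, stmt16_tele G p q hpq, hE, Finset.mul_sum]
    congr 1
    refine Finset.sum_congr rfl fun j hj => ?_
    ring
  -- sign sum evaluation
  have hpow : ∀ j, j ≤ k → (-1:ℝ)^(k-j) = (-1:ℝ)^k * (-1:ℝ)^j := by
    intro j hj
    have hmul : (-1:ℝ)^(k-j) * (-1:ℝ)^j = (-1:ℝ)^k := by
      rw [← pow_add]
      congr 1
      omega
    have hsq : (-1:ℝ)^j * (-1:ℝ)^j = 1 := by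
      rw [← pow_add, ← two_mul, pow_mul]
      norm_num
    calc (-1:ℝ)^(k-j) = (-1:ℝ)^(k-j) * ((-1:ℝ)^j * (-1:ℝ)^j) := by rw [hsq, mul_one]
      _ = ((-1:ℝ)^(k-j) * (-1:ℝ)^j) * (-1:ℝ)^j := by ring
      _ = (-1:ℝ)^k * (-1:ℝ)^j := by rw [hmul]
  have hEval : E = (-1:ℝ)^k * ((if Even q then 0 else 1) - (if Even p then 0 else 1)) := by
    rw [hE]
    have : ∀ j ∈ Finset.Ico p q, (-1:ℝ)^(k-j) = (-1:ℝ)^k * (-1:ℝ)^j := by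
      intro j hj
      have hj' := Finset.mem_Ico.mp hj
      exact hpow j (by omega)
    rw [Finset.sum_congr rfl this, ← Finset.mul_sum]
    congr 1
    rw [Finset.sum_Ico_eq_sub _ hpq, neg_one_geom_sum, neg_one_geom_sum]
  -- integer form of G
  set Gz : ℕ → ℤ := fun j => ∑ s ∈ Finset.Ico j k, (-1:ℤ)^(s-j) * (i s:ℤ) with hGz
  have hGcast : ∀ j, G j = ((Gz j : ℤ) : ℝ) := by
    intro j
    rw [hG, hGz]
    push_cast
    rfl
  by_cases hpar : (q - p) % 2 = 0
  · -- even case: E = 0, inequality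
    have hparEven : (Even q ↔ Even p) := by
      simp only [Nat.even_iff]; omega
    have hE0 : E = 0 := by
      rw [hEval]
      by_cases hq' : Even q
      · simp [hq', hparEven.mp hq']
      · have hp' : ¬ Even p := fun hp' => hq' (hparEven.mpr hp')
        simp [hq', hp']
    rw [stmt16_dot_add, stmt16_dot_eps, hD, hDtele, hE0]
    have hrho : rhoBarR l a - rhoBarR l b = (b:ℕ) - (a:ℕ) := by
      simp [rhoBarR]
    rw [hrho]
    have hba : ((a:ℕ):ℝ) < ((b:ℕ):ℝ) := by exact_mod_cast hab'
    rcases eq_or_lt_of_le hpq with hpe | hplt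
    · rw [hpe]
      linarith
    · -- p < q
      have hq0 : 0 < q := by omega
      have hevqp : (-1:ℝ)^(q-p) = 1 := by
        have : Even (q - p) := Nat.even_iff.mpr hpar
        exact this.neg_one_pow
      have hGpq : G p - G q = ∑ s ∈ Finset.Ico p q, (-1:ℝ)^(s-p) * (i s:ℝ) := by
        have hsplit : Finset.Ico p k = Finset.Ico p q ∪ Finset.Ico q k := by
          rw [Finset.Ico_union_Ico_eq_Ico hpq hqk]
        have hdisj : Disjoint (Finset.Ico p q) (Finset.Ico q k) :=
          Finset.Ico_disjoint_Ico_consecutive _ _ _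
        have h1 : G p = (∑ s ∈ Finset.Ico p q, (-1:ℝ)^(s-p) * (i s:ℝ))
            + ∑ s ∈ Finset.Ico q k, (-1:ℝ)^(s-p) * (i s:ℝ) := by
          show (∑ s ∈ Finset.Ico p k, (-1:ℝ)^(s-p) * (i s:ℝ)) = _
          rw [← Finset.sum_union hdisj, ← hsplit]
        have h2 : ∑ s ∈ Finset.Ico q k, (-1:ℝ)^(s-p) * (i s:ℝ) = G q := by
          show _ = ∑ s ∈ Finset.Ico q k, (-1:ℝ)^(s-q) * (i s:ℝ)
          refine Finset.sum_congr rfl fun s hs => ?_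
          have hs' := Finset.mem_Ico.mp hs
          have : s - p = (s - q) + (q - p) := by omega
          rw [this, pow_add, hevqp, mul_one]
        rw [h1, h2]; ring
      set n : ℕ := (q - p)/2 - 1 with hn
      have hqpn : q = p + 2*(n+1) := by omega
      have hkey := stmt16_keyineq k i hmono n p (by omega)
      rw [← hqpn] at hkey
      have hip : (a:ℕ) < i p := by
        have hpk' : p < k := by omega
        by_contra hcon
        have := (hia p hpk').mp (by omega)
        omega
      have hiq : i (q-1) ≤ (b:ℕ) := (hib (q-1) (by omega)).mpr (by omega)
      have hip' : ((a:ℕ):ℝ) + 1 ≤ (i p : ℝ) := by exact_mod_cast hip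
      have hiq' : (i (q-1) : ℝ) ≤ ((b:ℕ):ℝ) := by exact_mod_cast hiq
      rw [hGpq]
      linarith
  · -- odd case: contradiction with integrality
    exfalso
    obtain ⟨z, hz⟩ := hint
    rw [hD, hDtele] at hz
    have hparOdd : ¬ (Even q ↔ Even p) := by
      simp only [Nat.even_iff]; omega
    have hE1 : E = (-1:ℝ)^k ∨ E = -((-1:ℝ)^k) := by
      rw [hEval]
      by_cases hq' : Even q <;> by_cases hp' : Even p
      · exact absurd (iff_of_true hq' hp') hparOdd
      · right; rw [if_pos hq', if_neg hp']; ring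
      · left; rw [if_neg hq', if_pos hp']; ring
      · exact absurd (iff_of_false hq' hp') hparOdd
    have hodd : ∃ m : ℤ, ((l:ℝ) - 1/2) = (m : ℝ) ∨ ((l:ℝ) - 1/2) = -(m : ℝ) := by
      rcases Nat.even_or_odd k with hk | hk
      · have hk1 : (-1:ℝ)^k = 1 := hk.neg_one_pow
        rcases hE1 with hE1 | hE1
        · refine ⟨z - Gz p + Gz q, Or.inl ?_⟩
          rw [hGcast p, hGcast q] at hz
          rw [hE1, hk1, mul_one] at hz
          push_cast
          linarith
        · refine ⟨z - Gz p + Gz q, Or.inr ?_⟩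
          rw [hGcast p, hGcast q] at hz
          rw [hE1, hk1] at hz
          push_cast
          linarith
      · have hk1 : (-1:ℝ)^k = -1 := hk.neg_one_pow
        rcases hE1 with hE1 | hE1
        · refine ⟨z - Gz p + Gz q, Or.inr ?_⟩
          rw [hGcast p, hGcast q] at hz
          rw [hE1, hk1] at hz
          push_cast
          linarith
        · refine ⟨z - Gz p + Gz q, Or.inl ?_⟩
          rw [hGcast p, hGcast q] at hz
          rw [hE1, hk1] at hz
          push_cast
          linarith
    obtain ⟨m, hm⟩ := hodd
    rcases hm with hm | hm
    · have h2 : (2*m : ℤ) = 2*l - 1 := by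
        have : 2*(m:ℝ) = 2*(l:ℝ) - 1 := by linarith
        exact_mod_cast this
      omega
    · have h2 : (2*m : ℤ) = 1 - 2*l := by
        have : 2*(m:ℝ) = 1 - 2*(l:ℝ) := by linarith
        exact_mod_cast this
      omega
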